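/- The vector x̂ = a + P Hᵀ (H P Hᵀ + R)⁻¹ (c − H a) is the unique global minimizer over x ∈ ℝ^n of the weighted least squares objective of the batch-mode regression form, J(x) = (c − H x)ᵀ R⁻¹ (c − H x) + (a − x)ᵀ P⁻¹ (a − x). -/

import Mathlib

open Matrix

private lemma expand_quad {k : ℕ} (A : Matrix (Fin k) (Fin k) ℝ) (hA : Aᵀ = A)
    (u w : Fin k → ℝ) :
    (u - w) ⬝ᵥ A *ᵥ (u - w) =
      u ⬝ᵥ A *ᵥ u - 2 * (w ⬝ᵥ A *ᵥ u) + w ⬝ᵥ A *ᵥ w := by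
  have hsymm : u ⬝ᵥ A *ᵥ w = w ⬝ᵥ A *ᵥ u := by
    rw [dotProduct_mulVec, ← mulVec_transpose, hA, dotProduct_comm]
  simp only [mulVec_sub, dotProduct_sub, sub_dotProduct, hsymm]
  ring

theorem batch_mode_wls_unique_minimizer
    {m n : ℕ} (H : Matrix (Fin m) (Fin n) ℝ)
    (R : Matrix (Fin m) (Fin m) ℝ) (P : Matrix (Fin n) (Fin n) ℝ)
    (hR : R.PosDef) (hP : P.PosDef)
    (a : Fin n → ℝ) (c : Fin m → ℝ)
    (J : (Fin n → ℝ) → ℝ)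
    (hJ : ∀ x, J x = (c - H.mulVec x) ⬝ᵥ R⁻¹.mulVec (c - H.mulVec x) +
        (a - x) ⬝ᵥ P⁻¹.mulVec (a - x))
    (xhat : Fin n → ℝ)
    (hxhat : xhat = a + (P * Hᵀ * (H * P * Hᵀ + R)⁻¹).mulVec (c - H.mulVec a)) :
    ∀ x : Fin n → ℝ, x ≠ xhat → J xhat < J x := by
  intro x hx
  set S : Matrix (Fin m) (Fin m) ℝ := H * P * Hᵀ + R with hSdef
  have hS : S.PosDef := by
    have hpsd : (H * P * Hᵀ).PosSemidef := by
      have := hP.posSemidef.mul_mul_conjTranspose_same H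
      simpa using this
    rw [hSdef, add_comm]
    exact hR.add_posSemidef hpsd
  have hRdet : IsUnit R.det := isUnit_iff_ne_zero.mpr (ne_of_gt hR.det_pos)
  have hPdet : IsUnit P.det := isUnit_iff_ne_zero.mpr (ne_of_gt hP.det_pos)
  have hSdet : IsUnit S.det := isUnit_iff_ne_zero.mpr (ne_of_gt hS.det_pos)
  set e : Fin m → ℝ := c - H.mulVec a with he
  -- residuals at xhat
  set u : Fin m → ℝ := c - H.mulVec xhat with hu
  set v : Fin n → ℝ := a - xhat with hv
  have hu' : u = (R * S⁻¹).mulVec e := by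
    have hHw : H.mulVec ((P * Hᵀ * S⁻¹).mulVec e) = e - (R * S⁻¹).mulVec e := by
      rw [mulVec_mulVec]
      have h0 : H * (P * Hᵀ * S⁻¹) = 1 - R * S⁻¹ := by
        have h1 : H * (P * Hᵀ * S⁻¹) = (S - R) * S⁻¹ := by
          rw [hSdef, add_sub_cancel_right]; simp only [Matrix.mul_assoc]
        rw [h1, Matrix.sub_mul, Matrix.mul_nonsing_inv S hSdet]
      rw [h0, sub_mulVec, one_mulVec]
    rw [hu, hxhat, mulVec_add, hHw, he]
    abel
  have hv' : v = -((P * Hᵀ * S⁻¹).mulVec e) := by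
    rw [hv, hxhat]; abel
  -- the key stationarity identity
  have key : Hᵀ.mulVec (R⁻¹.mulVec u) + P⁻¹.mulVec v = 0 := by
    rw [hu', hv', mulVec_mulVec, mulVec_neg, mulVec_mulVec, mulVec_mulVec]
    have h1 : Hᵀ * R⁻¹ * (R * S⁻¹) = Hᵀ * S⁻¹ := by
      have : Hᵀ * R⁻¹ * (R * S⁻¹) = Hᵀ * (R⁻¹ * R) * S⁻¹ := by
        simp only [Matrix.mul_assoc]
      rw [this, Matrix.nonsing_inv_mul R hRdet, Matrix.mul_one]
    have h2 : P⁻¹ * (P * Hᵀ * S⁻¹) = Hᵀ * S⁻¹ := by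
      have : P⁻¹ * (P * Hᵀ * S⁻¹) = P⁻¹ * P * (Hᵀ * S⁻¹) := by
        simp only [Matrix.mul_assoc]
      rw [this, Matrix.nonsing_inv_mul P hPdet, Matrix.one_mul]
    rw [h1, h2]
    abel
  -- symmetry of the inverses
  have hRinv : (R⁻¹)ᵀ = R⁻¹ := by
    have := hR.inv.isHermitian
    simpa [Matrix.IsHermitian, Matrix.conjTranspose_eq_transpose_of_trivial] using this
  have hPinv : (P⁻¹)ᵀ = P⁻¹ := by
    have := hP.inv.isHermitian
    simpa [Matrix.IsHermitian, Matrix.conjTranspose_eq_transpose_of_trivial] using this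
  set d : Fin n → ℝ := x - xhat with hd
  have hdne : d ≠ 0 := sub_ne_zero.mpr hx
  have hcx : c - H.mulVec x = u - H.mulVec d := by
    rw [hu, hd, mulVec_sub]; abel
  have hax : a - x = v - d := by rw [hv, hd]; abel
  -- expansion
  have hJx : J x = J xhat + (H.mulVec d) ⬝ᵥ R⁻¹.mulVec (H.mulVec d) + d ⬝ᵥ P⁻¹.mulVec d
      - 2 * (d ⬝ᵥ (Hᵀ.mulVec (R⁻¹.mulVec u) + P⁻¹.mulVec v)) := by
    rw [hJ x, hJ xhat, hcx, hax, ← hu, ← hv,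
      expand_quad R⁻¹ hRinv u (H.mulVec d), expand_quad P⁻¹ hPinv v d]
    have h3 : (H.mulVec d) ⬝ᵥ R⁻¹.mulVec u = d ⬝ᵥ Hᵀ.mulVec (R⁻¹.mulVec u) := by
      rw [dotProduct_comm, dotProduct_mulVec (R⁻¹.mulVec u) H d, ← mulVec_transpose,
        dotProduct_comm]
    rw [h3]
    simp only [dotProduct_add]
    ring
  rw [hJx, key]
  have h4 : 0 ≤ (H.mulVec d) ⬝ᵥ R⁻¹.mulVec (H.mulVec d) := by
    have := hR.inv.posSemidef.dotProduct_mulVec_nonneg (H.mulVec d); simpa using this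
  have h5 : 0 < d ⬝ᵥ P⁻¹.mulVec d := by
    have := hP.inv.dotProduct_mulVec_pos hdne; simpa using this
  simp only [dotProduct_zero, mul_zero, sub_zero]
  linarith
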